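/- arXiv:1408.1056 — 2 statements merged into one kernel-verified Lean document; each statement's English description precedes it below -/
import Mathlib

section
/- There exists a universal constant C > 0 with the following property. Let f ∈ L^∞(ℝ) with f ≥ 0, and let θ : ℝ → ℝ be C¹, bounded, even, nonnegative, and nonincreasing on (0,∞), satisfying the stationary equation Hθ(x)·θ'(x) = f(x) for every x ∈ ℝ. Then |θ(x₁) − θ(x₂)| ≤ C·‖f‖_{L^∞}^{1/2}·|x₁ − x₂|^{1/2} for all x₁, x₂ ∈ ℝ; that is, θ is Hölder continuous of exponent 1/2. -/
open MeasureTheory Filter Set Topology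

/-- Truncated integral in the principal value defining the Hilbert transform of an even
function: `Hθ(x) = (2x/π) p.v. ∫₀^∞ (θ(y)-θ(x))/(y²-x²) dy`. -/
noncomputable def hilbertEvenApprox (θ : ℝ → ℝ) (x ε : ℝ) : ℝ :=
  ∫ y in {y : ℝ | ε < y ∧ ε < |y - abs x|}, (θ y - θ x) / (y ^ 2 - x ^ 2)

/-- The Hilbert transform of an even function `θ`,
`Hθ(x) = (2x/π) p.v. ∫₀^∞ (θ(y)-θ(x))/(y²-x²) dy`. -/
noncomputable def hilbertEven (θ : ℝ → ℝ) (x : ℝ) : ℝ :=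
  (2 * x / Real.pi) * limUnder (𝓝[>] (0:ℝ)) (hilbertEvenApprox θ x)

namespace Stmt6Aux
open scoped ENNReal NNReal

variable {θ f : ℝ → ℝ}

lemma measurable_g (hθ : ContDiff ℝ 1 θ) (x : ℝ) :
    Measurable fun y : ℝ => (θ y - θ x) / (y ^ 2 - x ^ 2) :=
  ((hθ.continuous.measurable).sub measurable_const).div
    ((measurable_id.pow_const 2).sub measurable_const)

lemma g_nonpos (hanti : AntitoneOn θ (Ioi 0)) {x y : ℝ} (hx : 0 < x) (hy : 0 < y) :
    (θ y - θ x) / (y ^ 2 - x ^ 2) ≤ 0 := by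
  rcases lt_trichotomy y x with h | h | h
  · apply div_nonpos_of_nonneg_of_nonpos
    · have := hanti (mem_Ioi.2 hy) (mem_Ioi.2 hx) h.le
      linarith
    · have : y ^ 2 < x ^ 2 := by nlinarith
      linarith
  · simp [h]
  · apply div_nonpos_of_nonpos_of_nonneg
    · have := hanti (mem_Ioi.2 hx) (mem_Ioi.2 (hx.trans h)) h.le
      linarith
    · have : x ^ 2 < y ^ 2 := by nlinarith
      linarith

lemma integrableOn_g (hθ : ContDiff ℝ 1 θ) {M : ℝ} (hM : ∀ z, |θ z| ≤ M)
    {x : ℝ} (hx : 0 < x) :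
    IntegrableOn (fun y => (θ y - θ x) / (y ^ 2 - x ^ 2)) (Ioi 0) := by
  have hmeas := measurable_g hθ x
  -- Lipschitz bound on [0, 2x]
  obtain ⟨L, hL⟩ : ∃ L, ∀ z ∈ Icc (0:ℝ) (2*x), ‖deriv θ z‖ ≤ L :=
    (isCompact_Icc).exists_bound_of_continuousOn
      ((hθ.continuous_deriv le_rfl).continuousOn)
  have hL0 : 0 ≤ L := le_trans (norm_nonneg _) (hL 0 ⟨le_rfl, by linarith⟩)
  have hlip : ∀ y ∈ Icc (0:ℝ) (2*x), |θ y - θ x| ≤ L * |y - x| := by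
    intro y hy
    have := Convex.norm_image_sub_le_of_norm_deriv_le
      (f := θ) (s := Icc (0:ℝ) (2*x))
      (fun z _ => hθ.differentiable one_ne_zero z) hL (convex_Icc _ _)
      ⟨hx.le, by linarith⟩ hy
    simpa [Real.norm_eq_abs] using this
  have h1 : IntegrableOn (fun y => (θ y - θ x) / (y ^ 2 - x ^ 2)) (Ioc 0 (2*x)) := by
    refine Integrable.mono' (g := fun _ => L / x)
      (integrableOn_const measure_Ioc_lt_top.ne) hmeas.aestronglyMeasurable.restrict ?_
    filter_upwards [ae_restrict_mem measurableSet_Ioc] with y hy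
    rcases eq_or_ne y x with rfl | hne
    · simp [Real.norm_eq_abs, div_nonneg hL0 hx.le]
    · have hy0 : 0 < y := hy.1
      have hden : |y ^ 2 - x ^ 2| = |y - x| * (y + x) := by
        rw [show y ^ 2 - x ^ 2 = (y - x) * (y + x) by ring, abs_mul,
          abs_of_pos (by linarith : (0:ℝ) < y + x)]
      have hxyx : x ≤ y + x := by linarith
      have habs : |y - x| > 0 := abs_pos.2 (sub_ne_zero.2 hne)
      rw [Real.norm_eq_abs, abs_div, hden]
      calc |θ y - θ x| / (|y - x| * (y + x)) ≤ (L * |y - x|) / (|y - x| * (y + x)) := by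
            apply div_le_div_of_nonneg_right ?_ (by positivity)
            exact hlip y ⟨hy0.le, hy.2⟩
        _ = L / (y + x) := by
            field_simp
        _ ≤ L / x := by
            apply div_le_div_of_nonneg_left hL0 (by linarith) hxyx
  have h2 : IntegrableOn (fun y => (θ y - θ x) / (y ^ 2 - x ^ 2)) (Ioi (2*x)) := by
    have hbase : IntegrableOn (fun y : ℝ => y ^ (-2 : ℝ)) (Ioi (2*x)) :=
      integrableOn_Ioi_rpow_of_lt (by norm_num) (by linarith)
    refine Integrable.mono' (hbase.const_mul (8*M/3)) hmeas.aestronglyMeasurable.restrict ?_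
    filter_upwards [ae_restrict_mem measurableSet_Ioi] with y hy
    simp only [mem_Ioi] at hy
    have hy0 : 0 < y := by linarith
    have hden : (3/4) * y ^ 2 ≤ y ^ 2 - x ^ 2 := by nlinarith
    have hdenpos : 0 < y ^ 2 - x ^ 2 := by nlinarith
    have hM0 : 0 ≤ M := le_trans (abs_nonneg _) (hM 0)
    have hnum : |θ y - θ x| ≤ 2 * M := by
      have := hM y; have := hM x
      have := abs_sub (θ y) (θ x)
      calc |θ y - θ x| ≤ |θ y| + |θ x| := abs_sub _ _
        _ ≤ 2 * M := by linarith [hM y, hM x]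
    rw [Real.norm_eq_abs, abs_div, abs_of_pos hdenpos]
    have hrw : y ^ (-2:ℝ) = (y ^ 2)⁻¹ := by
      rw [show (-2:ℝ) = -(2:ℕ) by norm_num, Real.rpow_neg hy0.le, Real.rpow_natCast]
    rw [hrw]
    calc |θ y - θ x| / (y ^ 2 - x ^ 2) ≤ (2*M) / ((3/4) * y ^ 2) := by
          apply div_le_div₀ (by linarith) hnum (by positivity) hden
      _ = 8*M/3 * (y ^ 2)⁻¹ := by field_simp; ring
  have : Ioi (0:ℝ) = Ioc 0 (2*x) ∪ Ioi (2*x) := (Ioc_union_Ioi_eq_Ioi (by linarith)).symm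
  rw [this]
  exact h1.union h2

lemma hilbertEven_eq (hθ : ContDiff ℝ 1 θ) {M : ℝ} (hM : ∀ z, |θ z| ≤ M)
    (hanti : AntitoneOn θ (Ioi 0)) {x : ℝ} (hx : 0 < x) :
    hilbertEven θ x = 2 * x / Real.pi * ∫ y in Ioi (0:ℝ), (θ y - θ x) / (y ^ 2 - x ^ 2) := by
  set g : ℝ → ℝ := fun y => (θ y - θ x) / (y ^ 2 - x ^ 2) with hg
  set I : ℝ := ∫ y in Ioi (0:ℝ), g y with hI
  have hint : IntegrableOn g (Ioi 0) := integrableOn_g hθ hM hx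
  have hmeas := measurable_g hθ x
  have habs : |x| = x := abs_of_pos hx
  -- the truncation sets
  set S : ℝ → Set ℝ := fun ε => {y : ℝ | ε < y ∧ ε < |y - x|} with hS
  have hSapprox : ∀ ε, hilbertEvenApprox θ x ε = ∫ y in S ε, g y := by
    intro ε; rw [hilbertEvenApprox, habs]
  have hSmeas : ∀ ε, MeasurableSet (S ε) := by
    intro ε
    exact (measurableSet_lt measurable_const measurable_id).inter
      (measurableSet_lt measurable_const (measurable_id.sub_const x).abs)
  have hSsub : ∀ ε > 0, S ε ⊆ Ioi 0 := fun ε hε y hy => lt_trans hε hy.1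
  have hSanti : ∀ ε₁ ε₂ : ℝ, ε₁ ≤ ε₂ → S ε₂ ⊆ S ε₁ :=
    fun ε₁ ε₂ h y hy => ⟨lt_of_le_of_lt h hy.1, lt_of_le_of_lt h hy.2⟩
  -- I ≤ h ε for ε > 0
  have hle : ∀ ε > 0, I ≤ ∫ y in S ε, g y := by
    intro ε hε
    have h1 : ∫ y in S ε, (-g) y ≤ ∫ y in Ioi (0:ℝ), (-g) y := by
      apply setIntegral_mono_set hint.neg
      · filter_upwards [ae_restrict_mem measurableSet_Ioi] with y hy
        simpa using g_nonpos hanti hx (mem_Ioi.1 hy)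
      · exact HasSubset.Subset.eventuallyLE (hSsub ε hε)
    simp only [Pi.neg_apply, integral_neg] at h1
    linarith
  -- monotonicity of truncated integrals
  have hmono : ∀ ε₁ ε₂ : ℝ, 0 < ε₁ → ε₁ ≤ ε₂ → ∫ y in S ε₁, g y ≤ ∫ y in S ε₂, g y := by
    intro ε₁ ε₂ hε₁ h
    have h1 : ∫ y in S ε₂, (-g) y ≤ ∫ y in S ε₁, (-g) y := by
      apply setIntegral_mono_set (MeasureTheory.IntegrableOn.mono_set hint.neg (hSsub ε₁ hε₁))
      · filter_upwards [ae_restrict_mem (hSmeas ε₁)] with y hy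
        simpa using g_nonpos hanti hx (lt_trans hε₁ hy.1)
      · exact HasSubset.Subset.eventuallyLE (hSanti ε₁ ε₂ h)
    simp only [Pi.neg_apply, integral_neg] at h1
    linarith
  -- sequential convergence
  have hseq : Tendsto (fun n : ℕ => ∫ y in S (1/(n+1)), g y) atTop (𝓝 I) := by
    have hunion : (⋃ n : ℕ, S (1/(n+1))) = Ioi 0 \ {x} := by
      ext y
      simp only [mem_iUnion, hS, mem_setOf_eq, mem_diff, mem_Ioi, mem_singleton_iff]
      constructor
      · rintro ⟨n, h1, h2⟩
        have hp : (0:ℝ) < 1/(n+1) := by positivity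
        exact ⟨lt_trans hp h1, fun h => by rw [h, sub_self, abs_zero] at h2; exact absurd h2 (not_lt.2 hp.le)⟩
      · rintro ⟨h1, h2⟩
        obtain ⟨n, hn⟩ := exists_nat_one_div_lt (lt_min h1 (abs_pos.2 (sub_ne_zero.2 h2)))
        exact ⟨n, lt_of_lt_of_le hn (min_le_left _ _), lt_of_lt_of_le hn (min_le_right _ _)⟩
    have hIeq : I = ∫ y in Ioi (0:ℝ) \ {x}, g y :=
      (setIntegral_congr_set (diff_ae_eq_self.2 (measure_mono_null inter_subset_right (measure_singleton x)))).symm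
    rw [hIeq, ← hunion]
    apply tendsto_setIntegral_of_monotone (fun n => hSmeas _)
    · intro m n hmn
      apply hSanti
      have : (m:ℝ) + 1 ≤ n + 1 := by exact_mod_cast Nat.succ_le_succ hmn
      exact one_div_le_one_div_of_le (by positivity) this
    · rw [hunion]; exact hint.mono_set diff_subset
  -- filter convergence
  have htends : Tendsto (hilbertEvenApprox θ x) (𝓝[>] (0:ℝ)) (𝓝 I) := by
    rw [tendsto_order]
    constructor
    · intro c hc
      filter_upwards [self_mem_nhdsWithin] with ε hε
      rw [hSapprox]
      exact lt_of_lt_of_le hc (hle ε hε)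
    · intro c hc
      obtain ⟨n, hn⟩ := (hseq.eventually_lt_const hc).exists
      have hp : (0:ℝ) < 1/(n+1) := by positivity
      filter_upwards [Ioo_mem_nhdsGT_of_mem (left_mem_Ico.2 hp)] with ε hε
      rw [hSapprox]
      exact lt_of_le_of_lt (hmono ε (1/(n+1)) hε.1 hε.2.le) hn
  rw [hilbertEven, htends.limUnder_eq]

lemma deriv_nonpos (hθ : ContDiff ℝ 1 θ) (hanti : AntitoneOn θ (Ioi 0)) {x : ℝ} (hx : 0 < x) :
    deriv θ x ≤ 0 := by
  have hd : HasDerivAt θ (deriv θ x) x := (hθ.differentiable one_ne_zero x).hasDerivAt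
  have hs : Tendsto (slope θ x) (𝓝[>] x) (𝓝 (deriv θ x)) :=
    (hasDerivAt_iff_tendsto_slope.1 hd).mono_left
      (nhdsWithin_mono x fun y hy => by
        simp only [mem_compl_iff, mem_singleton_iff]
        exact ne_of_gt hy)
  refine le_of_tendsto hs ?_
  filter_upwards [self_mem_nhdsWithin] with y hy
  have h1 : θ y ≤ θ x := hanti (mem_Ioi.2 hx) (mem_Ioi.2 (hx.trans hy)) hy.le
  rw [slope_def_field]
  exact div_nonpos_of_nonpos_of_nonneg (by linarith) (by simp only [mem_Ioi] at hy; linarith)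

lemma ae_bound {f : ℝ → ℝ} (hf : MemLp f ⊤ volume) :
    ∀ᵐ x, |f x| ≤ (eLpNorm f ⊤ volume).toReal := by
  have h := ae_le_eLpNormEssSup (f := f) (μ := volume)
  filter_upwards [h] with x hx
  rw [← eLpNorm_exponent_top] at hx
  have h2 := ENNReal.toReal_mono hf.2.ne hx
  simpa [Real.norm_eq_abs] using h2

lemma key_sq {f : ℝ → ℝ} (hf : MemLp f ⊤ volume)
    (hθ : ContDiff ℝ 1 θ) {M : ℝ} (hM : ∀ z, |θ z| ≤ M) (hanti : AntitoneOn θ (Ioi 0))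
    (heq : ∀ x, hilbertEven θ x * deriv θ x = f x)
    {b c : ℝ} (hb : 0 < b) (hbc : b ≤ c) (h2b : c ≤ 2 * b) :
    (θ b - θ c) ^ 2 ≤ 8 * Real.pi * (eLpNorm f ⊤ volume).toReal * (c - b) := by
  set K := (eLpNorm f ⊤ volume).toReal with hK
  have hc : 0 < c := lt_of_lt_of_le hb hbc
  have hπ : 0 < Real.pi := Real.pi_pos
  have hK0 : 0 ≤ K := ENNReal.toReal_nonneg
  have hcont : Continuous (deriv θ) := hθ.continuous_deriv le_rfl
  -- pointwise inequality on Icc b c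
  have hpt : ∀ x ∈ Icc b c, -(2 * (θ x - θ c) * deriv θ x) ≤ 8 * Real.pi * f x := by
    intro x hx
    have hx0 : 0 < x := lt_of_lt_of_le hb hx.1
    set d := deriv θ x with hd
    set A := θ x - θ c with hA
    have hA0 : 0 ≤ A := by
      rcases eq_or_lt_of_le hx.2 with h | h
      · simp [hA, h]
      · have := hanti (mem_Ioi.2 hx0) (mem_Ioi.2 hc) h.le
        linarith
    have hd0 : d ≤ 0 := deriv_nonpos hθ hanti hx0
    set g : ℝ → ℝ := fun y => (θ y - θ x) / (y ^ 2 - x ^ 2) with hg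
    set I : ℝ := ∫ y in Ioi (0:ℝ), g y with hI
    have hint : IntegrableOn g (Ioi 0) := integrableOn_g hθ hM hx0
    -- lower bound for -I
    have hIlb : A / (4 * c) ≤ -I := by
      have step1 : ∫ y in Ioo c (2*c), (fun _ => A / (4 * c ^ 2)) y
          ≤ ∫ y in Ioo c (2*c), (-g) y := by
        apply setIntegral_mono_on
        · exact integrableOn_const measure_Ioo_lt_top.ne
        · exact (MeasureTheory.IntegrableOn.mono_set hint.neg
            (fun y hy => lt_trans hc hy.1))
        · exact measurableSet_Ioo
        · intro y hy
          have hyx : x < y := lt_of_le_of_lt hx.2 hy.1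
          have hden : 0 < y ^ 2 - x ^ 2 := by nlinarith [hy.1, hx0]
          have hden4 : y ^ 2 - x ^ 2 ≤ 4 * c ^ 2 := by nlinarith [hy.2, hx0.le]
          have hnum : A ≤ θ x - θ y := by
            have := hanti (mem_Ioi.2 hc) (mem_Ioi.2 (lt_trans hc hy.1)) hy.1.le
            simp only [hA]; linarith
          calc A / (4 * c ^ 2) ≤ A / (y ^ 2 - x ^ 2) := by
                apply div_le_div_of_nonneg_left hA0 hden hden4
            _ ≤ (θ x - θ y) / (y ^ 2 - x ^ 2) := by gcongr
            _ = (-g) y := by simp [hg]; ring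
      have step2 : ∫ y in Ioo c (2*c), (-g) y ≤ ∫ y in Ioi (0:ℝ), (-g) y := by
        apply setIntegral_mono_set hint.neg
        · filter_upwards [ae_restrict_mem measurableSet_Ioi] with y hy
          simpa using g_nonpos hanti hx0 (mem_Ioi.1 hy)
        · exact HasSubset.Subset.eventuallyLE (fun y hy => lt_trans hc hy.1)
      have hconst : ∫ y in Ioo c (2*c), (fun _ => A / (4 * c ^ 2)) y = A / (4 * c) := by
        rw [setIntegral_const, measureReal_def, Real.volume_Ioo]
        rw [ENNReal.toReal_ofReal (by linarith), smul_eq_mul]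
        field_simp
        ring
      have hnegI : ∫ y in Ioi (0:ℝ), (-g) y = -I := by
        simp [hI, integral_neg]
      linarith [step1, step2, hconst ▸ step1]
    -- combine with the equation
    have hfx : f x = (2 * x / Real.pi) * (-I) * (-d) := by
      rw [← heq x, hilbertEven_eq hθ hM hanti hx0]
      simp only [← hI, ← hg, ← hd]
      ring
    have hxb : (0:ℝ) ≤ 2 * x / Real.pi := by positivity
    have hnd : 0 ≤ -d := by linarith
    have hc1 : (2 * b / Real.pi) * (A / (4*c)) * (-d) ≤ (2 * x / Real.pi) * (-I) * (-d) := by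
      apply mul_le_mul_of_nonneg_right _ hnd
      apply mul_le_mul _ hIlb (div_nonneg hA0 (by positivity)) (by positivity)
      gcongr
      linarith [hx.1]
    have hc2 : (c / Real.pi) * (A / (4*c)) * (-d) ≤ (2 * b / Real.pi) * (A / (4*c)) * (-d) := by
      apply mul_le_mul_of_nonneg_right _ hnd
      apply mul_le_mul_of_nonneg_right _ (div_nonneg hA0 (by positivity))
      gcongr
    have hc3 : (c / Real.pi) * (A / (4*c)) * (-d) = A * (-d) / (4 * Real.pi) := by
      field_simp
    rw [hfx]
    have : A * (-d) / (4 * Real.pi) ≤ (2 * x / Real.pi) * (-I) * (-d) := by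
      rw [← hc3]; exact le_trans hc2 hc1
    rw [div_le_iff₀ (by positivity)] at this
    nlinarith [this]
  -- FTC
  have hG : ∀ x, HasDerivAt (fun z => (θ z - θ c) ^ 2) (2 * (θ x - θ c) * deriv θ x) x := by
    intro x
    have h1 : HasDerivAt (fun z => θ z - θ c) (deriv θ x) x :=
      ((hθ.differentiable one_ne_zero x).hasDerivAt).sub_const (θ c)
    have := h1.fun_pow 2
    simpa [mul_comm, mul_assoc, mul_left_comm] using this
  have hijint : IntervalIntegrable (fun x => 2 * (θ x - θ c) * deriv θ x) volume b c :=
    ((continuous_const.mul (hθ.continuous.sub continuous_const)).mul hcont).intervalIntegrable b c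
  have hftc : ∫ x in b..c, 2 * (θ x - θ c) * deriv θ x = 0 - (θ b - θ c)^2 := by
    have := intervalIntegral.integral_eq_sub_of_hasDerivAt
      (f := fun z => (θ z - θ c) ^ 2) (f' := fun x => 2 * (θ x - θ c) * deriv θ x)
      (fun x _ => hG x) hijint
    simpa using this
  -- f is interval integrable and bounded
  have hfae : ∀ᵐ x, |f x| ≤ K := ae_bound hf
  have hfint : IntervalIntegrable f volume b c := by
    rw [intervalIntegrable_iff]
    apply Integrable.mono' (g := fun _ => K)
      (integrableOn_const measure_Ioc_lt_top.ne)
      hf.1.restrict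
    filter_upwards [ae_restrict_of_ae hfae] with y hy
    simpa [Real.norm_eq_abs] using hy
  have hfle : ∫ x in b..c, f x ≤ K * (c - b) := by
    have h1 : ∫ x in b..c, f x ≤ ∫ x in b..c, (fun _ => K) x :=
      intervalIntegral.integral_mono_ae hbc hfint intervalIntegrable_const
        (by filter_upwards [hfae] with y hy; exact le_trans (le_abs_self _) hy)
    have h2 : ∫ x in b..c, (fun _ => K) x = (c - b) * K := by
      simp [intervalIntegral.integral_const, smul_eq_mul]
    rw [h2] at h1
    linarith
  -- put together
  have hmono : -(8 * Real.pi * ∫ x in b..c, f x) ≤ ∫ x in b..c, 2 * (θ x - θ c) * deriv θ x := by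
    rw [← intervalIntegral.integral_const_mul, ← intervalIntegral.integral_neg]
    apply intervalIntegral.integral_mono_on hbc ((hfint.const_mul (8 * Real.pi)).neg) hijint
    intro x hx
    have := hpt x hx
    simp only [Pi.neg_apply]
    linarith
  rw [hftc] at hmono
  nlinarith [hfle, hmono, hπ]

lemma sub_nonneg_of_anti (hanti : AntitoneOn θ (Ioi 0)) {b c : ℝ} (hb : 0 < b) (hbc : b ≤ c) :
    0 ≤ θ b - θ c := by
  rcases eq_or_lt_of_le hbc with h' | h'
  · simp [h']
  · have := hanti (mem_Ioi.2 hb) (mem_Ioi.2 (hb.trans_le hbc)) h'.le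
    linarith

lemma key_sqrt (hf : MemLp f ⊤ volume) (heq : ∀ x, hilbertEven θ x * deriv θ x = f x)
    (hθ : ContDiff ℝ 1 θ) {M : ℝ} (hM : ∀ z, |θ z| ≤ M) (hanti : AntitoneOn θ (Ioi 0))
    {b c : ℝ} (hb : 0 < b) (hbc : b ≤ c) (h2b : c ≤ 2 * b) :
    θ b - θ c ≤ 6 * Real.sqrt (eLpNorm f ⊤ volume).toReal * Real.sqrt (c - b) := by
  set K := (eLpNorm f ⊤ volume).toReal with hK
  have hK0 : 0 ≤ K := ENNReal.toReal_nonneg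
  have h := key_sq hf hθ hM hanti heq hb hbc h2b
  have h1 : θ b - θ c ≤ Real.sqrt (8 * Real.pi * K * (c - b)) := Real.le_sqrt_of_sq_le h
  have h2 : Real.sqrt (8 * Real.pi * K * (c - b)) =
      Real.sqrt (8 * Real.pi) * Real.sqrt K * Real.sqrt (c - b) := by
    rw [← Real.sqrt_mul (by positivity), ← Real.sqrt_mul (by positivity)]
  have h3 : Real.sqrt (8 * Real.pi) ≤ 6 := by
    rw [show (6:ℝ) = Real.sqrt 36 by
      rw [show (36:ℝ) = 6 ^ 2 by norm_num, Real.sqrt_sq (by norm_num)]]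
    exact Real.sqrt_le_sqrt (by nlinarith [Real.pi_le_four])
  calc θ b - θ c ≤ Real.sqrt (8 * Real.pi) * Real.sqrt K * Real.sqrt (c - b) := by
        rw [← h2]; exact h1
    _ ≤ 6 * Real.sqrt K * Real.sqrt (c - b) := by
        apply mul_le_mul_of_nonneg_right (mul_le_mul_of_nonneg_right h3 (Real.sqrt_nonneg _))
          (Real.sqrt_nonneg _)

lemma key_dyadic (hf : MemLp f ⊤ volume) (heq : ∀ x, hilbertEven θ x * deriv θ x = f x)
    (hθ : ContDiff ℝ 1 θ) {M : ℝ} (hM : ∀ z, |θ z| ≤ M) (hanti : AntitoneOn θ (Ioi 0))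
    {t : ℝ} (ht : 0 < t) {u : ℝ} (hu : 0 < u) (hut : u ≤ t) :
    θ u - θ t ≤ 18 * Real.sqrt (eLpNorm f ⊤ volume).toReal * Real.sqrt t := by
  set K := (eLpNorm f ⊤ volume).toReal with hK
  have hK0 : 0 ≤ K := ENNReal.toReal_nonneg
  set s : ℝ := Real.sqrt 2 with hs
  have hs2 : s ^ 2 = 2 := Real.sq_sqrt (by norm_num)
  have hs1 : 1 < s := by nlinarith [Real.sqrt_nonneg 2]
  have hs0 : 0 < s := by linarith
  set q : ℝ := s⁻¹ with hq
  have hq0 : 0 < q := by positivity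
  have hqs : q * s = 1 := inv_mul_cancel₀ hs0.ne'
  have hq1 : q < 1 := by
    rw [hq, inv_lt_one_iff₀]; right; exact hs1
  -- single dyadic step
  have hstep : ∀ n : ℕ, θ (t / 2 ^ (n+1)) - θ (t / 2 ^ n) ≤
      6 * Real.sqrt K * Real.sqrt t * q ^ (n+1) := by
    intro n
    have hb : 0 < t / 2 ^ (n+1) := by positivity
    have hbc : t / 2 ^ (n+1) ≤ t / 2 ^ n := by
      apply div_le_div_of_nonneg_left ht.le (by positivity)
      apply pow_le_pow_right₀ (by norm_num) (Nat.le_succ n)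
    have h2b : t / 2 ^ n ≤ 2 * (t / 2 ^ (n+1)) := le_of_eq (by ring)
    have h := key_sqrt hf heq hθ hM hanti hb hbc h2b
    have hcb : t / 2 ^ n - t / 2 ^ (n+1) = t / 2 ^ (n+1) := by ring
    have hsqrt : Real.sqrt (t / 2 ^ (n+1)) = Real.sqrt t * q ^ (n+1) := by
      have hq2 : q ^ 2 = 1/2 := by
        rw [hq, inv_pow, hs2]; norm_num
      have hqq : (q ^ (n+1)) ^ 2 = (1/2) ^ (n+1) := by
        rw [← pow_mul, mul_comm, pow_mul, hq2]
      have : t / 2 ^ (n+1) = t * (q ^ (n+1)) ^ 2 := by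
        rw [hqq]; rw [div_pow, one_pow]; ring
      rw [this, Real.sqrt_mul ht.le, Real.sqrt_sq (by positivity)]
    rw [hcb, hsqrt] at h
    calc θ (t / 2 ^ (n+1)) - θ (t / 2 ^ n) ≤
        6 * Real.sqrt K * (Real.sqrt t * q ^ (n+1)) := h
      _ = 6 * Real.sqrt K * Real.sqrt t * q ^ (n+1) := by ring
  -- telescoping
  have hmain : ∀ n : ℕ, θ (t / 2 ^ n) - θ t ≤
      6 * Real.sqrt K * Real.sqrt t * ((s+1) * (1 - q ^ n)) := by
    intro n
    induction n with
    | zero => simp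
    | succ n ih =>
      have h1 := hstep n
      have hqn : q ^ n = q ^ (n+1) * s := by
        rw [pow_succ, mul_assoc, hqs, mul_one]
      have hkey : q ^ (n+1) + (s+1) * (1 - q ^ n) = (s+1) * (1 - q ^ (n+1)) := by
        rw [hqn]; linear_combination (-(q^(n+1))) * hs2
      have := add_le_add h1 ih
      calc θ (t / 2 ^ (n+1)) - θ t
          = (θ (t / 2 ^ (n+1)) - θ (t / 2 ^ n)) + (θ (t / 2 ^ n) - θ t) := by ring
        _ ≤ 6 * Real.sqrt K * Real.sqrt t * q ^ (n+1)
            + 6 * Real.sqrt K * Real.sqrt t * ((s+1) * (1 - q ^ n)) := this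
        _ = 6 * Real.sqrt K * Real.sqrt t * (q ^ (n+1) + (s+1) * (1 - q ^ n)) := by ring
        _ = 6 * Real.sqrt K * Real.sqrt t * ((s+1) * (1 - q ^ (n+1))) := by rw [hkey]
  -- choose n with t / 2^n < u
  obtain ⟨n, hn⟩ : ∃ n : ℕ, t / 2 ^ n < u := by
    obtain ⟨n, hn⟩ := exists_pow_lt_of_lt_one (div_pos hu ht) (by norm_num : (1:ℝ)/2 < 1)
    refine ⟨n, ?_⟩
    have : t * (1/2) ^ n < t * (u / t) := mul_lt_mul_of_pos_left hn ht
    rw [mul_div_cancel₀ _ ht.ne'] at this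
    calc t / 2 ^ n = t * (1/2) ^ n := by rw [div_pow, one_pow]; ring
      _ < u := this
  have hθle : θ u ≤ θ (t / 2 ^ n) :=
    hanti (mem_Ioi.2 (by positivity)) (mem_Ioi.2 hu) hn.le
  have hbound : (s+1) * (1 - q ^ n) ≤ 3 := by
    have hqn0 : 0 ≤ q ^ n := by positivity
    have : s ≤ 3/2 := by nlinarith [Real.sq_sqrt (show (0:ℝ) ≤ 2 by norm_num)]
    nlinarith
  have h6 : 0 ≤ 6 * Real.sqrt K * Real.sqrt t := by positivity
  calc θ u - θ t ≤ θ (t / 2 ^ n) - θ t := by linarith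
    _ ≤ 6 * Real.sqrt K * Real.sqrt t * ((s+1) * (1 - q ^ n)) := hmain n
    _ ≤ 6 * Real.sqrt K * Real.sqrt t * 3 := mul_le_mul_of_nonneg_left hbound h6
    _ = 18 * Real.sqrt K * Real.sqrt t := by ring



lemma key_dyadic' (hf : MemLp f ⊤ volume) (heq : ∀ x, hilbertEven θ x * deriv θ x = f x)
    (hθ : ContDiff ℝ 1 θ) {M : ℝ} (hM : ∀ z, |θ z| ≤ M) (hanti : AntitoneOn θ (Ioi 0))
    {t : ℝ} (ht : 0 < t) {u : ℝ} (hu : 0 ≤ u) (hut : u ≤ t) :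
    θ u - θ t ≤ 18 * Real.sqrt (eLpNorm f ⊤ volume).toReal * Real.sqrt t := by
  rcases hu.lt_or_eq with h | h
  · exact key_dyadic hf heq hθ hM hanti ht h hut
  · subst h
    have htends : Tendsto θ (𝓝[>] (0:ℝ)) (𝓝 (θ 0)) :=
      (hθ.continuous.tendsto 0).mono_left nhdsWithin_le_nhds
    have hev : ∀ᶠ u in 𝓝[>] (0:ℝ), θ u ≤
        θ t + 18 * Real.sqrt (eLpNorm f ⊤ volume).toReal * Real.sqrt t := by
      filter_upwards [Ioo_mem_nhdsGT_of_mem (left_mem_Ico.2 ht)] with u hu'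
      linarith [key_dyadic hf heq hθ hM hanti ht hu'.1 hu'.2.le]
    linarith [le_of_tendsto htends hev]

lemma anti_Ici (hθc : Continuous θ) (hanti : AntitoneOn θ (Ioi 0)) :
    AntitoneOn θ (Ici 0) := by
  intro u hu v hv huv
  rcases (mem_Ici.1 hu).lt_or_eq with h | h
  · exact hanti (mem_Ioi.2 h) (mem_Ioi.2 (h.trans_le huv)) huv
  · subst h
    rcases (mem_Ici.1 hv).lt_or_eq with h' | h'
    · have htends : Tendsto θ (𝓝[>] (0:ℝ)) (𝓝 (θ 0)) :=
        (hθc.tendsto 0).mono_left nhdsWithin_le_nhds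
      refine ge_of_tendsto htends ?_
      filter_upwards [Ioo_mem_nhdsGT_of_mem (left_mem_Ico.2 h')] with w hw
      exact hanti (mem_Ioi.2 hw.1) (mem_Ioi.2 h') hw.2.le
    · rw [← h']

lemma main_ordered (hf : MemLp f ⊤ volume) (heq : ∀ x, hilbertEven θ x * deriv θ x = f x)
    (hθ : ContDiff ℝ 1 θ) {M : ℝ} (hM : ∀ z, |θ z| ≤ M) (hanti : AntitoneOn θ (Ioi 0))
    {s t : ℝ} (hs : 0 ≤ s) (hst : s ≤ t) :
    θ s - θ t ≤ 30 * Real.sqrt (eLpNorm f ⊤ volume).toReal * Real.sqrt (t - s) := by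
  set K := (eLpNorm f ⊤ volume).toReal with hK
  have hK0 : 0 ≤ K := ENNReal.toReal_nonneg
  rcases hst.lt_or_eq with h | h
  swap
  · subst h; simp
  have ht : 0 < t := lt_of_le_of_lt hs h
  rcases le_or_gt t (2 * s) with h2 | h2
  · -- s is comparable with t
    have hs0 : 0 < s := by linarith
    have := key_sqrt hf heq hθ hM hanti hs0 hst h2
    have hnn : 0 ≤ Real.sqrt K * Real.sqrt (t - s) := by positivity
    nlinarith
  · -- s < t/2
    have h1 := key_dyadic' hf heq hθ hM hanti ht hs hst
    have h2' : Real.sqrt t ≤ Real.sqrt 2 * Real.sqrt (t - s) := by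
      rw [← Real.sqrt_mul (by norm_num)]
      exact Real.sqrt_le_sqrt (by linarith)
    have hsq2 : Real.sqrt 2 ≤ 5/3 := by
      nlinarith [Real.sq_sqrt (show (0:ℝ) ≤ 2 by norm_num), Real.sqrt_nonneg 2]
    have hKn : 0 ≤ Real.sqrt K := Real.sqrt_nonneg _
    have htn : 0 ≤ Real.sqrt (t - s) := Real.sqrt_nonneg _
    calc θ s - θ t ≤ 18 * Real.sqrt K * Real.sqrt t := h1
      _ ≤ 18 * Real.sqrt K * (Real.sqrt 2 * Real.sqrt (t - s)) := by
          apply mul_le_mul_of_nonneg_left h2' (by positivity)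
      _ ≤ 18 * Real.sqrt K * (5/3 * Real.sqrt (t - s)) := by
          apply mul_le_mul_of_nonneg_left (mul_le_mul_of_nonneg_right hsq2 htn) (by positivity)
      _ = 30 * Real.sqrt K * Real.sqrt (t - s) := by ring


end Stmt6Aux

/-- Theorem: there is a universal constant `C > 0` such that any `C¹`, bounded, even,
nonnegative function `θ`, nonincreasing on `(0,∞)`, solving the stationary equation
`Hθ(x) · θ'(x) = f(x)` for every `x`, with `0 ≤ f ∈ L^∞(ℝ)`, satisfies
`|θ(x₁) - θ(x₂)| ≤ C ‖f‖_{L^∞}^{1/2} |x₁-x₂|^{1/2}` for all `x₁, x₂`. -/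
theorem stmt_6 :
    ∃ C : ℝ, 0 < C ∧
      ∀ f θ : ℝ → ℝ,
        MemLp f ⊤ volume → (∀ x : ℝ, 0 ≤ f x) →
        ContDiff ℝ 1 θ →
        (∃ M : ℝ, ∀ x : ℝ, |θ x| ≤ M) →
        (∀ x : ℝ, θ (-x) = θ x) →
        (∀ x : ℝ, 0 ≤ θ x) →
        AntitoneOn θ (Set.Ioi 0) →
        (∀ x : ℝ, hilbertEven θ x * deriv θ x = f x) →
        ∀ x₁ x₂ : ℝ,
          |θ x₁ - θ x₂| ≤
            C * Real.sqrt (eLpNorm f ⊤ volume).toReal * Real.sqrt |x₁ - x₂| := by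
  refine ⟨30, by norm_num, ?_⟩
  rintro f θ hf hf0 hθ ⟨M, hM⟩ heven hθ0 hanti heq x₁ x₂
  set K := (eLpNorm f ⊤ volume).toReal with hK
  have hK0 : 0 ≤ K := ENNReal.toReal_nonneg
  have habs : ∀ z : ℝ, θ |z| = θ z := by
    intro z
    rcases abs_cases z with ⟨h, _⟩ | ⟨h, _⟩
    · rw [h]
    · rw [h, heven]
  have hIci := Stmt6Aux.anti_Ici hθ.continuous hanti
  have key : ∀ s t : ℝ, 0 ≤ s → s ≤ t →
      |θ s - θ t| ≤ 30 * Real.sqrt K * Real.sqrt (t - s) := by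
    intro s t hs hst
    rw [abs_of_nonneg (sub_nonneg.2 (hIci (mem_Ici.2 hs) (mem_Ici.2 (hs.trans hst)) hst))]
    exact Stmt6Aux.main_ordered hf heq hθ hM hanti hs hst
  have hfinal : abs (θ (|x₁|) - θ (|x₂|)) ≤ 30 * Real.sqrt K * Real.sqrt (abs (|x₁| - |x₂|)) := by
    rcases le_total (|x₁|) (|x₂|) with h | h
    · have := key (|x₁|) (|x₂|) (abs_nonneg _) h
      have he : abs (|x₁| - |x₂|) = |x₂| - |x₁| := by
        rw [abs_sub_comm]; exact abs_of_nonneg (by linarith)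
      rw [he]
      exact this
    · have := key (|x₂|) (|x₁|) (abs_nonneg _) h
      have he : abs (|x₁| - |x₂|) = |x₁| - |x₂| := abs_of_nonneg (by linarith)
      rw [he, abs_sub_comm]
      exact this
  rw [habs x₁, habs x₂] at hfinal
  refine le_trans hfinal ?_
  apply mul_le_mul_of_nonneg_left _ (by positivity)
  exact Real.sqrt_le_sqrt (abs_abs_sub_abs_le_abs_sub x₁ x₂)
end

section
/- Let θ : ℝ → ℝ be continuous, bounded, even, and nonincreasing on [0,∞), and let 0 < x₂ < x₁. Then the integrand in the formula Hθ(x₂) = (2x₂/π)·∫₀^∞ (θ(y)−θ(x₂))/(y²−x₂²) dy is nonpositive, and −Hθ(x₂) ≥ (1/π)·log((x₁+x₂)/(x₁−x₂))·(θ(x₂)−θ(x₁)) ≥ 0. -/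
open MeasureTheory Filter Set Topology

/-- Theorem: for a continuous, bounded, even function `θ` nonincreasing on `[0,∞)` and
`0 < x₂ < x₁`: the integrand in `Hθ(x₂) = (2x₂/π)∫₀^∞ (θ(y)-θ(x₂))/(y²-x₂²) dy` is
nonpositive, and `-Hθ(x₂) ≥ (1/π)·log((x₁+x₂)/(x₁-x₂))·(θ(x₂)-θ(x₁)) ≥ 0`.  Here
`-Hθ(x₂) = (2x₂/π)·∫₀^∞ (θ(x₂)-θ(y))/(y²-x₂²) dy` is interpreted as a well-defined value in
`[0,∞]`, via the Lebesgue integral of the nonnegative integrand. -/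
theorem stmt_12 (θ : ℝ → ℝ)
    (hcont : Continuous θ)
    (hbdd : ∃ M : ℝ, ∀ x : ℝ, |θ x| ≤ M)
    (heven : ∀ x : ℝ, θ (-x) = θ x)
    (hmono : AntitoneOn θ (Set.Ici 0))
    (x₁ x₂ : ℝ) (hx₂ : 0 < x₂) (hx₁ : x₂ < x₁) :
    (∀ y : ℝ, 0 < y → (θ y - θ x₂) / (y ^ 2 - x₂ ^ 2) ≤ 0) ∧
    0 ≤ (1 / Real.pi) * Real.log ((x₁ + x₂) / (x₁ - x₂)) * (θ x₂ - θ x₁) ∧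
    ENNReal.ofReal ((1 / Real.pi) * Real.log ((x₁ + x₂) / (x₁ - x₂)) * (θ x₂ - θ x₁))
      ≤ ENNReal.ofReal (2 * x₂ / Real.pi) *
          ∫⁻ y in Set.Ioi (0:ℝ), ENNReal.ofReal ((θ x₂ - θ y) / (y ^ 2 - x₂ ^ 2)) := by
  have hx₂0 : (0:ℝ) ≤ x₂ := hx₂.le
  have hx₁0 : (0:ℝ) ≤ x₁ := hx₂0.trans hx₁.le
  have hc : 0 ≤ θ x₂ - θ x₁ := sub_nonneg.mpr (hmono hx₂0 hx₁0 hx₁.le)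
  have hL : 0 ≤ Real.log ((x₁ + x₂) / (x₁ - x₂)) := by
    apply Real.log_nonneg
    rw [le_div_iff₀ (by linarith)]
    linarith
  set c := θ x₂ - θ x₁ with hc_def
  set L := Real.log ((x₁ + x₂) / (x₁ - x₂)) with hL_def
  refine ⟨?_, ?_, ?_⟩
  · intro y hy
    rcases le_or_gt x₂ y with h | h
    · rw [div_nonpos_iff]
      right
      constructor
      · exact sub_nonpos.mpr (hmono hx₂0 (hx₂0.trans h) h)
      · have : x₂ ^ 2 ≤ y ^ 2 := pow_le_pow_left₀ hx₂0 h 2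
        linarith
    · rw [div_nonpos_iff]
      left
      constructor
      · exact sub_nonneg.mpr (hmono hy.le hx₂0 h.le)
      · have : y ^ 2 ≤ x₂ ^ 2 := pow_le_pow_left₀ hy.le h.le 2
        nlinarith
  · have : (0:ℝ) ≤ 1 / Real.pi := by positivity
    exact mul_nonneg (mul_nonneg this hL) hc
  · -- main estimate
    have hx12 : 0 < x₁ - x₂ := by linarith
    -- antiderivative
    set f : ℝ → ℝ := fun y => (1 / (2 * x₂)) * (Real.log (y - x₂) - Real.log (y + x₂)) with hf
    have hderiv : ∀ y ∈ Ioi x₁, HasDerivAt f (1 / (y ^ 2 - x₂ ^ 2)) y := by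
      intro y hy
      simp only [mem_Ioi] at hy
      have h1 : (0:ℝ) < y - x₂ := by linarith
      have h2 : (0:ℝ) < y + x₂ := by linarith
      have d1 : HasDerivAt (fun y : ℝ => Real.log (y - x₂)) (1 / (y - x₂)) y := by
        have := ((hasDerivAt_id y).sub_const x₂).log h1.ne'
        simpa [one_div] using this
      have d2 : HasDerivAt (fun y : ℝ => Real.log (y + x₂)) (1 / (y + x₂)) y := by
        have := ((hasDerivAt_id y).add_const x₂).log h2.ne'
        simpa [one_div] using this
      have := ((d1.sub d2).const_mul (1 / (2 * x₂)))
      refine this.congr_deriv ?_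
      have hyx : y ^ 2 - x₂ ^ 2 > 0 := by nlinarith
      have e1 : y - x₂ ≠ 0 := h1.ne'
      have e2 : y + x₂ ≠ 0 := h2.ne'
      have e3 : y ^ 2 - x₂ ^ 2 ≠ 0 := hyx.ne'
      have e4 : x₂ ≠ 0 := hx₂.ne'
      field_simp
      ring
    have hcontf : ContinuousOn f (Ici x₁) := by
      apply ContinuousOn.mul continuousOn_const
      apply ContinuousOn.sub
      · apply ContinuousOn.log (by fun_prop)
        intro y hy; simp only [mem_Ici] at hy; intro h; linarith [h]
      · apply ContinuousOn.log (by fun_prop)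
        intro y hy; simp only [mem_Ici] at hy; intro h; linarith [h]
    have hnonneg : ∀ y ∈ Ioi x₁, 0 ≤ 1 / (y ^ 2 - x₂ ^ 2) := by
      intro y hy
      simp only [mem_Ioi] at hy
      have : (0:ℝ) < y ^ 2 - x₂ ^ 2 := by nlinarith
      positivity
    have htend : Tendsto f atTop (𝓝 0) := by
      have h1 : Tendsto (fun y : ℝ => (y - x₂) / (y + x₂)) atTop (𝓝 1) := by
        have h2 : Tendsto (fun y : ℝ => 1 - (2 * x₂) / (y + x₂)) atTop (𝓝 1) := by
          have := Tendsto.div_atTop (tendsto_const_nhds (x := (2 * x₂)))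
            (tendsto_atTop_add_const_right atTop x₂ tendsto_id)
          simpa using (tendsto_const_nhds (x := (1:ℝ))).sub this
        apply h2.congr'
        filter_upwards [eventually_gt_atTop x₂] with y hy
        have h3 : y + x₂ ≠ 0 := by intro h; linarith
        field_simp
        ring
      have h4 : Tendsto (fun y : ℝ => Real.log (y - x₂) - Real.log (y + x₂)) atTop (𝓝 0) := by
        have := (Real.continuousAt_log (x := (1:ℝ)) one_ne_zero).tendsto.comp h1
        simp only [Real.log_one] at this
        apply this.congr'
        filter_upwards [eventually_gt_atTop x₂] with y hy
        have h5 : (0:ℝ) < y - x₂ := by linarith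
        have h6 : (0:ℝ) < y + x₂ := by linarith
        simp [Function.comp, Real.log_div h5.ne' h6.ne']
      have := h4.const_mul (1 / (2 * x₂))
      simp only [mul_zero] at this
      exact this
    have hint : IntegrableOn (fun y => 1 / (y ^ 2 - x₂ ^ 2)) (Ioi x₁) := by
      exact integrableOn_Ioi_deriv_of_nonneg (hcontf x₁ Set.self_mem_Ici) hderiv hnonneg htend
    have hval : ∫ y in Ioi x₁, 1 / (y ^ 2 - x₂ ^ 2) = (1 / (2 * x₂)) * L := by
      rw [integral_Ioi_of_hasDerivAt_of_nonneg (hcontf x₁ Set.self_mem_Ici) hderiv hnonneg htend]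
      rw [hf, hL_def]
      have h5 : (0:ℝ) < x₁ - x₂ := hx12
      have h6 : (0:ℝ) < x₁ + x₂ := by linarith
      rw [Real.log_div h6.ne' h5.ne']
      ring
    -- the restricted integrand bound
    have key : ∫⁻ y in Ioi x₁, ENNReal.ofReal (c * (1 / (y ^ 2 - x₂ ^ 2)))
        ≤ ∫⁻ y in Ioi (0:ℝ), ENNReal.ofReal ((θ x₂ - θ y) / (y ^ 2 - x₂ ^ 2)) := by
      calc ∫⁻ y in Ioi x₁, ENNReal.ofReal (c * (1 / (y ^ 2 - x₂ ^ 2)))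
          ≤ ∫⁻ y in Ioi x₁, ENNReal.ofReal ((θ x₂ - θ y) / (y ^ 2 - x₂ ^ 2)) := by
            apply setLIntegral_mono_ae
            · apply Measurable.aemeasurable
              apply Measurable.ennreal_ofReal
              exact (measurable_const.sub hcont.measurable).div
                ((measurable_id.pow_const 2).sub measurable_const)
            · filter_upwards with y
              intro hy
              simp only [mem_Ioi] at hy
              apply ENNReal.ofReal_le_ofReal
              have hd : (0:ℝ) < y ^ 2 - x₂ ^ 2 := by nlinarith
              rw [mul_one_div]
              apply div_le_div_of_nonneg_right ?_ hd.le
              have : θ y ≤ θ x₁ := hmono hx₁0 (by linarith [hy] : (0:ℝ) ≤ y) hy.le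
              rw [hc_def]; linarith
        _ ≤ ∫⁻ y in Ioi (0:ℝ), ENNReal.ofReal ((θ x₂ - θ y) / (y ^ 2 - x₂ ^ 2)) := by
            apply lintegral_mono_set
            intro y hy
            simp only [mem_Ioi] at *
            linarith
    -- compute the lower lintegral
    have hcomp : ∫⁻ y in Ioi x₁, ENNReal.ofReal (c * (1 / (y ^ 2 - x₂ ^ 2)))
        = ENNReal.ofReal (c * ((1 / (2 * x₂)) * L)) := by
      rw [← ofReal_integral_eq_lintegral_ofReal]
      · rw [integral_const_mul, hval]
      · exact hint.const_mul c
      · filter_upwards [ae_restrict_mem measurableSet_Ioi] with y hy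
        exact mul_nonneg hc (hnonneg y hy)
    calc ENNReal.ofReal ((1 / Real.pi) * L * c)
        = ENNReal.ofReal (2 * x₂ / Real.pi) * ENNReal.ofReal (c * ((1 / (2 * x₂)) * L)) := by
          rw [← ENNReal.ofReal_mul (by positivity)]
          congr 1
          field_simp
      _ ≤ ENNReal.ofReal (2 * x₂ / Real.pi) *
          ∫⁻ y in Ioi (0:ℝ), ENNReal.ofReal ((θ x₂ - θ y) / (y ^ 2 - x₂ ^ 2)) := by
          apply mul_le_mul_right
          rw [← hcomp]
          exact key
end
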